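/- Suppose |S| ≥ |T| ≥ 2. Let B be the space of nonempty compact convex subsets of Δ(S) equipped with the Hausdorff metric, and give B^T the product topology. Let I := {Π ∈ B^T : Π satisfies convex independence} and D := {Π ∈ B^T : Π satisfies convex dependence}. Then neither I nor D is residual (comeager) in B^T. -/

import Mathlib

noncomputable section

open TopologicalSpace

/-- The space of nonempty compact convex subsets of the simplex `Δ(S)`, viewed as a subspace of
the space of nonempty compact subsets of `ℝ^S` equipped with the Hausdorff metric. -/
def Bel (S : Type*) [Fintype S] : Type _ :=
  {K : NonemptyCompacts (S → ℝ) //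
    Convex ℝ (K : Set (S → ℝ)) ∧ (K : Set (S → ℝ)) ⊆ stdSimplex ℝ S}

instance (S : Type*) [Fintype S] : MetricSpace (Bel S) :=
  inferInstanceAs (MetricSpace {K : NonemptyCompacts (S → ℝ) //
    Convex ℝ (K : Set (S → ℝ)) ∧ (K : Set (S → ℝ)) ⊆ stdSimplex ℝ S})

/-- A tuple of belief sets satisfies convex independence. -/
def ConvexIndep {S T : Type*} [Fintype S] (Q : T → Bel S) : Prop :=
  ∀ t : T, ((Q t).1 : Set (S → ℝ)) ∩
    closure (convexHull ℝ (⋃ s ∈ {s : T | s ≠ t}, ((Q s).1 : Set (S → ℝ)))) = ∅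

/-- A tuple of belief sets satisfies convex dependence. -/
def ConvexDep {S T : Type*} [Fintype S] (Q : T → Bel S) : Prop :=
  ∃ t : T, closure (convexHull ℝ (⋃ s ∈ {s : T | s ≠ t}, ((Q s).1 : Set (S → ℝ)))) ⊆ ((Q t).1 : Set (S → ℝ))

open Metric Set

/-- The set of nonempty compact sets that are convex and contained in the simplex is closed
in the Hausdorff metric. -/
lemma isClosed_belAux (S : Type*) [Fintype S] :
    IsClosed {K : NonemptyCompacts (S → ℝ) |
      Convex ℝ (K : Set (S → ℝ)) ∧ (K : Set (S → ℝ)) ⊆ stdSimplex ℝ S} := by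
  refine isClosed_of_closure_subset fun K hK => ?_
  have key : ∀ ε > (0:ℝ), ∃ L : NonemptyCompacts (S → ℝ),
      (Convex ℝ (L : Set (S → ℝ)) ∧ (L : Set (S → ℝ)) ⊆ stdSimplex ℝ S) ∧ dist K L < ε := by
    intro ε hε
    rcases Metric.mem_closure_iff.1 hK ε hε with ⟨L, hL, hd⟩
    exact ⟨L, hL, hd⟩
  have hKcl : IsClosed (K : Set (S → ℝ)) := K.isCompact.isClosed
  constructor
  · intro x hx y hy a b ha hb hab
    rw [← hKcl.closure_eq]
    refine Metric.mem_closure_iff.2 fun ε hε => ?_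
    obtain ⟨L, ⟨hLconv, _⟩, hd⟩ := key (ε/3) (by linarith)
    rw [NonemptyCompacts.dist_eq] at hd
    have hfin : EMetric.hausdorffEdist (K : Set (S → ℝ)) (L : Set (S → ℝ)) ≠ ⊤ :=
      hausdorffEdist_ne_top_of_nonempty_of_bounded K.nonempty L.nonempty
        K.isCompact.isBounded L.isCompact.isBounded
    obtain ⟨x', hx', hxx'⟩ := exists_dist_lt_of_hausdorffDist_lt hx hd hfin
    obtain ⟨y', hy', hyy'⟩ := exists_dist_lt_of_hausdorffDist_lt hy hd hfin
    have hz' : a • x' + b • y' ∈ (L : Set (S → ℝ)) := hLconv hx' hy' ha hb hab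
    obtain ⟨w, hw, hzw⟩ := exists_dist_lt_of_hausdorffDist_lt' hz' hd hfin
    refine ⟨w, hw, ?_⟩
    have h1 : dist (a • x + b • y) (a • x' + b • y') ≤ a * dist x x' + b * dist y y' := by
      rw [dist_eq_norm, dist_eq_norm, dist_eq_norm]
      have : (a • x + b • y) - (a • x' + b • y') = a • (x - x') + b • (y - y') := by module
      rw [this]
      calc ‖a • (x - x') + b • (y - y')‖ ≤ ‖a • (x - x')‖ + ‖b • (y - y')‖ := norm_add_le _ _
        _ = a * ‖x - x'‖ + b * ‖y - y'‖ := by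
            rw [norm_smul, norm_smul, Real.norm_of_nonneg ha, Real.norm_of_nonneg hb]
    have h2 : a * dist x x' + b * dist y y' ≤ ε/3 := by
      calc a * dist x x' + b * dist y y'
          ≤ a * (ε/3) + b * (ε/3) :=
            add_le_add (mul_le_mul_of_nonneg_left hxx'.le ha)
              (mul_le_mul_of_nonneg_left hyy'.le hb)
        _ = ε/3 := by rw [← add_mul, hab, one_mul]
    have h3 : dist (a • x' + b • y') w < ε/3 := by rwa [dist_comm] at hzw
    calc dist (a • x + b • y) w ≤ dist (a • x + b • y) (a • x' + b • y') + dist _ w :=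
          dist_triangle _ _ _
      _ < ε/3 + ε/3 := add_lt_add_of_le_of_lt (h1.trans h2) h3
      _ ≤ ε := by linarith
  · intro x hx
    have hscl : IsClosed (stdSimplex ℝ S) := (isCompact_stdSimplex ℝ S).isClosed
    rw [← hscl.closure_eq]
    refine Metric.mem_closure_iff.2 fun ε hε => ?_
    obtain ⟨L, ⟨_, hLs⟩, hd⟩ := key ε hε
    rw [NonemptyCompacts.dist_eq] at hd
    have hfin : EMetric.hausdorffEdist (K : Set (S → ℝ)) (L : Set (S → ℝ)) ≠ ⊤ :=
      hausdorffEdist_ne_top_of_nonempty_of_bounded K.nonempty L.nonempty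
        K.isCompact.isBounded L.isCompact.isBounded
    obtain ⟨x', hx', hxx'⟩ := exists_dist_lt_of_hausdorffDist_lt hx hd hfin
    exact ⟨x', hLs hx', hxx'⟩

instance Bel.completeSpace (S : Type*) [Fintype S] : CompleteSpace (Bel S) :=
  (isClosed_belAux S).completeSpace_coe

/-- The barycenter of the simplex. -/
lemma bary_mem_stdSimplex (S : Type*) [Fintype S] [Nonempty S] :
    (fun _ => (Fintype.card S : ℝ)⁻¹) ∈ stdSimplex ℝ S := by
  have hnpos : (0:ℝ) < (Fintype.card S : ℝ) := by
    have : (0:ℕ) < Fintype.card S := Fintype.card_pos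
    exact_mod_cast this
  refine ⟨fun i => inv_nonneg.2 hnpos.le, ?_⟩
  simp [Finset.sum_const, Finset.card_univ, nsmul_eq_mul, mul_inv_cancel₀ hnpos.ne']

/-- If a closed convex subset of the simplex comes `ε`-close (with `ε = 1/n²`) to every point of
the simplex, then it contains the barycenter. -/
lemma bary_mem {S : Type*} [Fintype S] [Nonempty S] {K : Set (S → ℝ)}
    (hKc : Convex ℝ K) (hKcl : IsClosed K) (hKs : K ⊆ stdSimplex ℝ S)
    (hnear : ∀ y ∈ stdSimplex ℝ S, ∃ x ∈ K, dist y x < ((Fintype.card S : ℝ))⁻¹ ^ 2) :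
    (fun _ => (Fintype.card S : ℝ)⁻¹) ∈ K := by
  classical
  set n : ℝ := (Fintype.card S : ℝ) with hn
  have hn1 : 1 ≤ n := by
    have : (1:ℕ) ≤ Fintype.card S := Fintype.card_pos
    rw [hn]; exact_mod_cast this
  have hnpos : 0 < n := lt_of_lt_of_le one_pos hn1
  set b : S → ℝ := fun _ => n⁻¹ with hbdef
  have hb1 : ∑ i, b i = 1 := by
    have : ∑ i : S, b i = (Fintype.card S : ℝ) * n⁻¹ := by
      simp [hbdef, Finset.sum_const, Finset.card_univ, nsmul_eq_mul]
    rw [this, ← hn, mul_inv_cancel₀ hnpos.ne']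
  have hbΔ : b ∈ stdSimplex ℝ S := ⟨fun i => inv_nonneg.2 hnpos.le, hb1⟩
  by_contra hb
  obtain ⟨f, u, hfK, hub⟩ := geometric_hahn_banach_closed_point hKc hKcl hb
  set g : S → ℝ := fun i => f (Pi.single i 1) with hg
  set m : ℝ := (∑ i, g i) / n with hm
  set v : S → ℝ := fun i => g i - m with hv
  have hsum_v : ∑ i, v i = 0 := by
    simp only [hv, Finset.sum_sub_distrib, Finset.sum_const, Finset.card_univ, nsmul_eq_mul, hm]
    field_simp
    rw [← hn]; ring
  have hf_eq : ∀ x : S → ℝ, (∑ i, x i = 1) → f x = (∑ i, x i * v i) + m := by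
    intro x hx
    have hxr : f x = ∑ i, x i * g i := by
      conv_lhs => rw [pi_eq_sum_univ x, map_sum]
      refine Finset.sum_congr rfl fun i _ => ?_
      rw [map_smul, smul_eq_mul]
      congr 1
      show f _ = f (Pi.single i 1)
      congr 1
      funext j
      simp [Pi.single_apply, eq_comm]
    rw [hxr]
    have : ∑ i, x i * v i = (∑ i, x i * g i) - (∑ i, x i) * m := by
      rw [Finset.sum_mul]
      rw [← Finset.sum_sub_distrib]
      refine Finset.sum_congr rfl fun i _ => ?_
      simp [hv]; ring
    rw [this, hx]; ring
  set L : ℝ := ∑ i, |v i| with hL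
  by_cases hvz : ∀ i, v i = 0
  · obtain ⟨x, hxK, _⟩ := hnear b hbΔ
    have hx1 : ∑ i, x i = 1 := (hKs hxK).2
    have hfx := hf_eq x hx1
    have hfb := hf_eq b hb1
    simp only [hvz, mul_zero, Finset.sum_const_zero, zero_add] at hfx hfb
    have := hfK x hxK
    rw [hfx] at this; rw [hfb] at hub; linarith
  · push_neg at hvz
    obtain ⟨i0, hi0⟩ := hvz
    have hLpos : 0 < L :=
      Finset.sum_pos' (fun i _ => abs_nonneg _) ⟨i0, Finset.mem_univ _, abs_pos.2 hi0⟩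
    set t : ℝ := 1 / (n * L) with ht
    have htpos : 0 < t := by positivity
    have habs_le : ∀ i, |v i| ≤ L :=
      fun i => Finset.single_le_sum (fun j _ => abs_nonneg (v j)) (Finset.mem_univ i)
    set y : S → ℝ := fun i => b i + t * v i with hy
    have hyΔ : y ∈ stdSimplex ℝ S := by
      constructor
      · intro i
        have h1 : |t * v i| ≤ t * L := by
          rw [abs_mul, abs_of_pos htpos]
          exact mul_le_mul_of_nonneg_left (habs_le i) htpos.le
        have h2 : t * L = n⁻¹ := by
          rw [ht]; field_simp
        have : -(n⁻¹) ≤ t * v i := by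
          rw [← h2]; exact neg_le_of_abs_le h1
        simp only [hy, hbdef]
        linarith
      · simp only [hy, Finset.sum_add_distrib, ← Finset.mul_sum, hsum_v, mul_zero, add_zero]
        exact hb1
    obtain ⟨x, hxK, hdxy⟩ := hnear y hyΔ
    have hx1 : ∑ i, x i = 1 := (hKs hxK).2
    have key : f x - f b = ∑ i, (x i - b i) * v i := by
      rw [hf_eq x hx1, hf_eq b hb1, add_sub_add_right_eq_sub, ← Finset.sum_sub_distrib]
      exact Finset.sum_congr rfl fun i _ => by ring
    set A : ℝ := ∑ i, (x i - y i) * v i with hA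
    set Sv : ℝ := ∑ i, (v i) ^ 2 with hSv
    have e1 : f x - f b = A + t * Sv := by
      rw [key, hA, hSv, Finset.mul_sum, ← Finset.sum_add_distrib]
      refine Finset.sum_congr rfl fun i _ => ?_
      simp only [hy]; ring
    have hd0 : 0 ≤ dist y x := dist_nonneg
    have bound : |A| ≤ dist y x * L := by
      calc |A| ≤ ∑ i, |(x i - y i) * v i| := Finset.abs_sum_le_sum_abs _ _
        _ = ∑ i, |x i - y i| * |v i| := by simp [abs_mul]
        _ ≤ ∑ i, dist y x * |v i| := by
            refine Finset.sum_le_sum fun i _ => ?_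
            refine mul_le_mul_of_nonneg_right ?_ (abs_nonneg _)
            rw [abs_sub_comm, ← Real.dist_eq]
            exact dist_le_pi_dist y x i
        _ = dist y x * L := by rw [← Finset.mul_sum]
    have hCS : L ^ 2 ≤ n * Sv := by
      have h := sq_sum_le_card_mul_sum_sq (s := (Finset.univ : Finset S)) (f := fun i => |v i|)
      simpa [sq_abs, Finset.card_univ, ← hL, ← hSv, hn] using h
    have hfxb : f x - f b < 0 := by
      have := hfK x hxK; linarith
    have hts : L / n ^ 2 ≤ t * Sv := by
      rw [ht, one_div, inv_mul_eq_div, div_le_div_iff₀ (by positivity) (by positivity)]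
      nlinarith [hCS, hLpos.le, hnpos.le, mul_le_mul_of_nonneg_left hCS hnpos.le]
    have hAlb : -(dist y x * L) ≤ A := neg_le_of_abs_le bound
    have hdlt : dist y x * L < n⁻¹ ^ 2 * L :=
      mul_lt_mul_of_pos_right hdxy hLpos
    have : (0:ℝ) < A + t * Sv := by
      have hinv : n⁻¹ ^ 2 * L = L / n ^ 2 := by field_simp
      nlinarith [hAlb, hdlt, hts]
    linarith [e1 ▸ hfxb]

theorem stmt_19 {S T : Type*} [Fintype S] [Fintype T] [Nonempty S] [Nonempty T]
    (hST : Fintype.card T ≤ Fintype.card S) (hT : 2 ≤ Fintype.card T) :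
    ¬ ({Q : T → Bel S | ConvexIndep Q} ∈ residual (T → Bel S)) ∧
    ¬ ({Q : T → Bel S | ConvexDep Q} ∈ residual (T → Bel S)) := by
  classical
  have hT1 : 1 < Fintype.card T := hT
  have hEdist : ∀ (K L : NonemptyCompacts (S → ℝ)),
      EMetric.hausdorffEdist (K : Set (S → ℝ)) (L : Set (S → ℝ)) ≠ ⊤ := fun K L =>
    hausdorffEdist_ne_top_of_nonempty_of_bounded K.nonempty L.nonempty
      K.isCompact.isBounded L.isCompact.isBounded
  constructor
  · -- independence is not residual
    intro hres
    have hdense := dense_of_mem_residual hres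
    set ε : ℝ := ((Fintype.card S : ℝ))⁻¹ ^ 2 with hε
    have hεpos : 0 < ε := by
      have : (0:ℕ) < Fintype.card S := Fintype.card_pos
      have : (0:ℝ) < (Fintype.card S : ℝ) := by exact_mod_cast this
      positivity
    -- the tuple of full simplices
    set Q0 : T → Bel S := fun _ =>
      ⟨⟨⟨stdSimplex ℝ S, isCompact_stdSimplex ℝ S⟩, ⟨_, bary_mem_stdSimplex S⟩⟩,
        convex_stdSimplex ℝ S, subset_rfl⟩ with hQ0
    obtain ⟨Q, hQball, hQI⟩ := (dense_iff_inter_open.1 hdense) (Metric.ball Q0 ε)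
      Metric.isOpen_ball ⟨Q0, Metric.mem_ball_self hεpos⟩
    have hbmem : ∀ t : T, (fun _ => (Fintype.card S : ℝ)⁻¹) ∈ ((Q t).1 : Set (S → ℝ)) := by
      intro t
      have hdt : dist (Q t) (Q0 t) < ε :=
        lt_of_le_of_lt (dist_le_pi_dist Q Q0 t) (Metric.mem_ball.1 hQball)
      change dist (Q t).1 (Q0 t).1 < ε at hdt; rw [NonemptyCompacts.dist_eq] at hdt
      refine bary_mem (Q t).2.1 (Q t).1.isCompact.isClosed (Q t).2.2 fun y hy => ?_
      have hy' : y ∈ ((Q0 t).1 : Set (S → ℝ)) := hy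
      obtain ⟨x, hx, hdxy⟩ := exists_dist_lt_of_hausdorffDist_lt' hy' hdt
        (hEdist (Q t).1 (Q0 t).1)
      exact ⟨x, hx, by rwa [dist_comm] at hdxy⟩
    obtain ⟨a, c, hac⟩ := Fintype.exists_pair_of_one_lt_card hT1
    have hmem : (fun _ => (Fintype.card S : ℝ)⁻¹) ∈ (((Q a).1 : Set (S → ℝ)) ∩
        closure (convexHull ℝ (⋃ s ∈ {s : T | s ≠ a}, ((Q s).1 : Set (S → ℝ))))) :=
      ⟨hbmem a, subset_closure (subset_convexHull _ _
        (Set.mem_biUnion (show c ∈ {s : T | s ≠ a} from hac.symm) (hbmem c)))⟩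
    rw [hQI a] at hmem
    exact hmem
  · -- dependence is not residual
    intro hres
    have hdense := dense_of_mem_residual hres
    obtain ⟨f⟩ := Function.Embedding.nonempty_of_card_le hST
    set vert : T → (S → ℝ) := fun t => Pi.single (f t) 1 with hvert
    set Q1 : T → Bel S := fun t =>
      ⟨⟨⟨{vert t}, isCompact_singleton⟩, Set.singleton_nonempty _⟩, convex_singleton _,
        Set.singleton_subset_iff.2 (single_mem_stdSimplex ℝ (f t))⟩ with hQ1
    obtain ⟨Q, hQball, hQD⟩ := (dense_iff_inter_open.1 hdense) (Metric.ball Q1 (1/3))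
      Metric.isOpen_ball ⟨Q1, Metric.mem_ball_self (by norm_num)⟩
    obtain ⟨t, hsub⟩ := hQD
    haveI : Nontrivial T := Fintype.one_lt_card_iff_nontrivial.1 hT1
    obtain ⟨s, hst⟩ := exists_ne t
    have hds : dist (Q s) (Q1 s) < 1/3 :=
      lt_of_le_of_lt (dist_le_pi_dist Q Q1 s) (Metric.mem_ball.1 hQball)
    have hdt : dist (Q t) (Q1 t) < 1/3 :=
      lt_of_le_of_lt (dist_le_pi_dist Q Q1 t) (Metric.mem_ball.1 hQball)
    change dist (Q s).1 (Q1 s).1 < 1/3 at hds; change dist (Q t).1 (Q1 t).1 < 1/3 at hdt; rw [NonemptyCompacts.dist_eq] at hds hdt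
    have hvs : vert s ∈ ((Q1 s).1 : Set (S → ℝ)) := rfl
    obtain ⟨p, hp, hpvs⟩ := exists_dist_lt_of_hausdorffDist_lt' hvs hds (hEdist (Q s).1 (Q1 s).1)
    have hpQt : p ∈ ((Q t).1 : Set (S → ℝ)) :=
      hsub (subset_closure (subset_convexHull _ _
        (Set.mem_biUnion (show s ∈ {s : T | s ≠ t} from hst) hp)))
    obtain ⟨q, hq, hpq⟩ := exists_dist_lt_of_hausdorffDist_lt hpQt hdt (hEdist (Q t).1 (Q1 t).1)
    have hq' : q = vert t := hq
    have hfst : f s ≠ f t := fun h => hst (f.injective h)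
    have hone : (1:ℝ) ≤ dist (vert s) (vert t) := by
      have h1 : dist (vert s (f s)) (vert t (f s)) ≤ dist (vert s) (vert t) :=
        dist_le_pi_dist _ _ _
      have h2 : vert s (f s) = 1 := by simp [hvert]
      have h3 : vert t (f s) = 0 := by simp [hvert, Pi.single_eq_of_ne hfst]
      rw [h2, h3, Real.dist_eq] at h1
      simpa using h1
    have : dist (vert s) (vert t) ≤ dist (vert s) p + dist p (vert t) := dist_triangle _ _ _
    rw [dist_comm (vert s) p] at this
    rw [hq'] at hpq
    linarith
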